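/- Let G be a second countable locally compact Hausdorff topological group with left Haar measure μ and let ω be a Borel 2-cocycle on G. On L²(G×G, μ×μ) let U be the unitary (Uξ)(s,t) = ω(t⁻¹s,s⁻¹)·ξ(s,s⁻¹t), and for g ∈ G let B̃_g be the map sending ξ to the function (s,t) ↦ \overline{ω(g⁻¹,t⁻¹)}·ξ(s,tg). Then each B̃_g is a well-defined bounded linear operator on L²(G×G, μ×μ) and U ∘ B̃_g = B̃_g ∘ U for all g ∈ G. (In the notation of the paper: Wω̃ commutes with 1 ⊗ ρ^{\overline{ω̃}}_g.) -/

import Mathlib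

open MeasureTheory Filter ENNReal
open scoped NNReal ComplexConjugate

namespace Stmt11Aux

variable {α : Type*} [MeasurableSpace α] {ν : Measure α}

lemma unit_norm {z : ℂ} (hz : ‖z‖ = 1) (w : ℂ) : ‖z * w‖ = ‖w‖ := by
  rw [norm_mul, hz, one_mul]

lemma mul_conj_unit {z : ℂ} (hz : ‖z‖ = 1) : z * conj z = 1 := by
  rw [Complex.mul_conj]
  norm_cast
  rw [Complex.normSq_eq_norm_sq, hz, one_pow]

lemma prod_smul_right {α β : Type*} [MeasurableSpace α] [MeasurableSpace β]
    (μ : Measure α) (ν : Measure β) [SFinite ν] (c : ℝ≥0∞) :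
    μ.prod (c • ν) = c • μ.prod ν := by
  ext s hs
  rw [Measure.prod_apply hs, Measure.smul_apply, Measure.prod_apply hs, smul_eq_mul,
    ← lintegral_const_mul _ (measurable_measure_prodMk_left hs)]
  simp

lemma coc_key {G : Type*} [Group G] (ω : G → G → ℂ)
    (habs : ∀ g h : G, ‖ω g h‖ = 1)
    (hcoc : ∀ g h k : G, ω g h * ω (g * h) k = ω g (h * k) * ω h k)
    (g s t : G) :
    ω (t⁻¹ * s) s⁻¹ * conj (ω g⁻¹ (t⁻¹ * s)) =
      conj (ω g⁻¹ t⁻¹) * ω (g⁻¹ * (t⁻¹ * s)) s⁻¹ := by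
  have key := hcoc g⁻¹ (t⁻¹ * s) s⁻¹
  rw [mul_inv_cancel_right] at key
  have hX := mul_conj_unit (habs g⁻¹ (t⁻¹ * s))
  have hY := mul_conj_unit (habs g⁻¹ t⁻¹)
  linear_combination (-(conj (ω g⁻¹ (t⁻¹ * s))) * conj (ω g⁻¹ t⁻¹)) * key
    + conj (ω g⁻¹ t⁻¹) * ω (g⁻¹ * (t⁻¹ * s)) s⁻¹ * hX
    - ω (t⁻¹ * s) s⁻¹ * conj (ω g⁻¹ (t⁻¹ * s)) * hY

/-- A weighted composition operator on `L²`: multiplication by a unimodular function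
composed with a measurable equivalence that scales the measure by a finite nonzero factor. -/
lemma exists_op (e : α ≃ᵐ α) (c : ℝ≥0) (hc : c ≠ 0)
    (he : ν.map e = (c : ℝ≥0∞) • ν)
    (m : α → ℂ) (hm : Measurable m) (hab : ∀ x, ‖m x‖ = 1) :
    ∃ T : Lp ℂ 2 ν →L[ℂ] Lp ℂ 2 ν,
      (∀ ξ : Lp ℂ 2 ν, (T ξ : α → ℂ) =ᵐ[ν] fun x => m x * ξ (e x)) ∧
      (∀ ξ : Lp ℂ 2 ν, ‖T ξ‖ = (c : ℝ) ^ (2⁻¹ : ℝ) * ‖ξ‖) := by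
  have hac : ν.map e ≪ ν := by rw [he]; exact Measure.smul_absolutelyContinuous
  have hcomp : ∀ {f g : α → ℂ}, f =ᵐ[ν] g →
      (fun x => f (e x)) =ᵐ[ν] (fun x => g (e x)) := by
    intro f g h
    exact ae_eq_comp e.measurable.aemeasurable (h.filter_mono hac.ae_le)
  have hsnorm : ∀ f : α → ℂ, AEStronglyMeasurable f ν →
      eLpNorm (fun x => m x * f (e x)) 2 ν = (c : ℝ≥0∞) ^ (2⁻¹ : ℝ) * eLpNorm f 2 ν := by
    intro f hf
    have h1 : eLpNorm (fun x => m x * f (e x)) 2 ν = eLpNorm (fun x => f (e x)) 2 ν :=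
      eLpNorm_congr_norm_ae (Eventually.of_forall fun x => unit_norm (hab x) _)
    have hfm : AEStronglyMeasurable f (ν.map e) := hf.mono_ac hac
    have h2 : eLpNorm f 2 (ν.map e) = eLpNorm (fun x => f (e x)) 2 ν :=
      eLpNorm_map_measure hfm e.measurable.aemeasurable
    rw [h1, ← h2, he, eLpNorm_smul_measure_of_ne_top (by norm_num : (2:ℝ≥0∞) ≠ ∞)]
    rw [smul_eq_mul]
    norm_num [ENNReal.toReal_inv]
  have hmem : ∀ ξ : Lp ℂ 2 ν, MemLp (fun x => m x * (ξ : α → ℂ) (e x)) 2 ν := by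
    intro ξ
    have hqmp : Measure.QuasiMeasurePreserving e ν ν := ⟨e.measurable, hac⟩
    refine ⟨hm.aestronglyMeasurable.mul
      ((Lp.aestronglyMeasurable ξ).comp_quasiMeasurePreserving hqmp), ?_⟩
    rw [hsnorm _ (Lp.aestronglyMeasurable ξ)]
    exact ENNReal.mul_lt_top
      (ENNReal.rpow_lt_top_of_nonneg (by norm_num) ENNReal.coe_ne_top)
      (Lp.eLpNorm_lt_top ξ)
  have hFae : ∀ ξ : Lp ℂ 2 ν,
      ((hmem ξ).toLp _ : α → ℂ) =ᵐ[ν] fun x => m x * ξ (e x) :=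
    fun ξ => MemLp.coeFn_toLp _
  have hnorm : ∀ ξ : Lp ℂ 2 ν, ‖(hmem ξ).toLp _‖ = (c : ℝ) ^ (2⁻¹ : ℝ) * ‖ξ‖ := by
    intro ξ
    rw [Lp.norm_toLp _ (hmem ξ), hsnorm _ (Lp.aestronglyMeasurable ξ), Lp.norm_def,
      ENNReal.toReal_mul, ← ENNReal.coe_rpow_of_nonneg _ (by norm_num : (0:ℝ) ≤ 2⁻¹),
      ENNReal.coe_toReal, NNReal.coe_rpow]
  have hadd : ∀ ξ η : Lp ℂ 2 ν, (hmem (ξ + η)).toLp _ = (hmem ξ).toLp _ + (hmem η).toLp _ := by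
    intro ξ η
    apply Lp.ext
    have h1 : (fun x => m x * ((ξ + η : Lp ℂ 2 ν) : α → ℂ) (e x)) =ᵐ[ν]
        fun x => m x * (ξ : α → ℂ) (e x) + m x * (η : α → ℂ) (e x) := by
      filter_upwards [hcomp (Lp.coeFn_add ξ η)] with x hx
      rw [hx]; simp [mul_add]
    refine ((hFae _).trans h1).trans ?_
    refine (((hFae ξ).add (hFae η)).symm.trans (Lp.coeFn_add _ _).symm).symm.symm
  have hsmul : ∀ (a : ℂ) (ξ : Lp ℂ 2 ν), (hmem (a • ξ)).toLp _ = a • (hmem ξ).toLp _ := by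
    intro a ξ
    apply Lp.ext
    have h1 : (fun x => m x * ((a • ξ : Lp ℂ 2 ν) : α → ℂ) (e x)) =ᵐ[ν]
        fun x => a • (m x * (ξ : α → ℂ) (e x)) := by
      filter_upwards [hcomp (Lp.coeFn_smul a ξ)] with x hx
      rw [hx]; simp [smul_eq_mul]; ring
    refine ((hFae _).trans h1).trans ?_
    exact (((hFae ξ).const_smul a).symm.trans (Lp.coeFn_smul a _).symm).symm.symm
  let T0 : Lp ℂ 2 ν →ₗ[ℂ] Lp ℂ 2 ν :=
    { toFun := fun ξ => (hmem ξ).toLp _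
      map_add' := hadd
      map_smul' := hsmul }
  refine ⟨T0.mkContinuous ((c : ℝ) ^ (2⁻¹ : ℝ))
    (fun ξ => le_of_eq (hnorm ξ)), fun ξ => hFae ξ, fun ξ => hnorm ξ⟩

end Stmt11Aux

/-- On `L²(G×G)` let `U` be the unitary `(Uξ)(s,t) = ω(t⁻¹s,s⁻¹)·ξ(s,s⁻¹t)` and for `g ∈ G`
let `B̃_g` send `ξ` to `(s,t) ↦ conj(ω(g⁻¹,t⁻¹))·ξ(s,tg)`. Then each `B̃_g` is a well-defined
bounded linear operator on `L²(G×G)` and `U ∘ B̃_g = B̃_g ∘ U` for all `g`.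
(In the paper's notation: `Wω̃` commutes with `1 ⊗ ρ^{conj(ω̃)}_g`.) -/
theorem stmt_11 {G : Type*} [TopologicalSpace G] [Group G] [IsTopologicalGroup G]
    [SecondCountableTopology G] [LocallyCompactSpace G] [T2Space G]
    [MeasurableSpace G] [BorelSpace G]
    (μ : Measure G) [μ.IsHaarMeasure]
    (ω : G → G → ℂ)
    (hmeas : Measurable fun p : G × G => ω p.1 p.2)
    (habs : ∀ g h : G, ‖ω g h‖ = 1)
    (hcoc : ∀ g h k : G, ω g h * ω (g * h) k = ω g (h * k) * ω h k) :
    ∃ U : Lp ℂ 2 (μ.prod μ) ≃ₗᵢ[ℂ] Lp ℂ 2 (μ.prod μ),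
      (∀ ξ : Lp ℂ 2 (μ.prod μ), (U ξ : G × G → ℂ) =ᵐ[μ.prod μ]
        fun p => ω (p.2⁻¹ * p.1) p.1⁻¹ * ξ (p.1, p.1⁻¹ * p.2)) ∧
      ∀ g : G,
        (∃ B : Lp ℂ 2 (μ.prod μ) →L[ℂ] Lp ℂ 2 (μ.prod μ),
          ∀ ξ : Lp ℂ 2 (μ.prod μ), (B ξ : G × G → ℂ) =ᵐ[μ.prod μ]
            fun p => starRingEnd ℂ (ω g⁻¹ p.2⁻¹) * ξ (p.1, p.2 * g)) ∧
        (∀ B : Lp ℂ 2 (μ.prod μ) →L[ℂ] Lp ℂ 2 (μ.prod μ),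
          (∀ ξ : Lp ℂ 2 (μ.prod μ), (B ξ : G × G → ℂ) =ᵐ[μ.prod μ]
            fun p => starRingEnd ℂ (ω g⁻¹ p.2⁻¹) * ξ (p.1, p.2 * g)) →
          ∀ ξ : Lp ℂ 2 (μ.prod μ), U (B ξ) = B (U ξ)) := by
  classical
  set ν := μ.prod μ with hν
  -- the shear `(s,t) ↦ (s, s⁻¹t)` and the weight for `U`
  let eU : (G × G) ≃ᵐ (G × G) := (MeasurableEquiv.shearMulRight G).symm
  have heU : ∀ p : G × G, eU p = (p.1, p.1⁻¹ * p.2) := fun p => rfl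
  have heV : ∀ p : G × G, eU.symm p = (p.1, p.1 * p.2) := fun p => rfl
  have hUpres : MeasurePreserving eU ν ν := measurePreserving_prod_inv_mul μ μ
  have hUmap : ν.map eU = ((1 : ℝ≥0) : ℝ≥0∞) • ν := by rw [hUpres.map_eq]; simp
  let mU : G × G → ℂ := fun p => ω (p.2⁻¹ * p.1) p.1⁻¹
  have hmU : Measurable mU :=
    hmeas.comp ((measurable_snd.inv.mul measurable_fst).prodMk measurable_fst.inv)
  have habsU : ∀ p : G × G, ‖mU p‖ = 1 := fun p => habs _ _
  obtain ⟨TU, hTUae, hTUnorm⟩ := Stmt11Aux.exists_op eU 1 one_ne_zero hUmap mU hmU habsU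
  -- the inverse of `U`
  have hVmap : ν.map eU.symm = ((1 : ℝ≥0) : ℝ≥0∞) • ν := by
    rw [(hUpres.symm eU).map_eq]; simp
  let mV : G × G → ℂ := fun x => conj (mU (eU.symm x))
  have hmV : Measurable mV :=
    Complex.continuous_conj.measurable.comp (hmU.comp eU.symm.measurable)
  have habsV : ∀ x, ‖mV x‖ = 1 := fun x => by
    simpa [mV, Complex.norm_conj] using habsU (eU.symm x)
  obtain ⟨TV, hTVae, hTVnorm⟩ := Stmt11Aux.exists_op eU.symm 1 one_ne_zero hVmap mV hmV habsV
  -- a.e. composition helpers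
  have hacU : ν.map eU ≪ ν := by rw [hUmap]; exact Measure.smul_absolutelyContinuous
  have hacV : ν.map eU.symm ≪ ν := by rw [hVmap]; exact Measure.smul_absolutelyContinuous
  have hcompU : ∀ {f g : G × G → ℂ}, f =ᵐ[ν] g →
      (fun x => f (eU x)) =ᵐ[ν] fun x => g (eU x) :=
    fun h => ae_eq_comp eU.measurable.aemeasurable (h.filter_mono hacU.ae_le)
  have hcompV : ∀ {f g : G × G → ℂ}, f =ᵐ[ν] g →
      (fun x => f (eU.symm x)) =ᵐ[ν] fun x => g (eU.symm x) :=
    fun h => ae_eq_comp eU.symm.measurable.aemeasurable (h.filter_mono hacV.ae_le)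
  have hmulU : ∀ x, mU x * conj (mU x) = 1 := fun x => Stmt11Aux.mul_conj_unit (habsU x)
  -- `TV` is a two-sided inverse of `TU`
  have hUV : ∀ ξ, TU (TV ξ) = ξ := by
    intro ξ
    apply Lp.ext
    filter_upwards [hTUae (TV ξ), hcompU (hTVae ξ)] with x h1 h2
    rw [h1, h2]
    simp only [mV, MeasurableEquiv.symm_apply_apply]
    rw [← mul_assoc, hmulU x, one_mul]
  have hVU : ∀ ξ, TV (TU ξ) = ξ := by
    intro ξ
    apply Lp.ext
    filter_upwards [hTVae (TU ξ), hcompV (hTUae ξ)] with x h1 h2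
    rw [h1, h2]
    simp only [mV, MeasurableEquiv.apply_symm_apply]
    rw [← mul_assoc, mul_comm (conj (mU (eU.symm x))) (mU (eU.symm x)), hmulU (eU.symm x),
      one_mul]
  -- assemble the unitary
  let Ueq : Lp ℂ 2 ν ≃ₗ[ℂ] Lp ℂ 2 ν :=
    LinearEquiv.ofLinear (TU : Lp ℂ 2 ν →ₗ[ℂ] Lp ℂ 2 ν) (TV : Lp ℂ 2 ν →ₗ[ℂ] Lp ℂ 2 ν)
      (LinearMap.ext hUV) (LinearMap.ext hVU)
  let U : Lp ℂ 2 ν ≃ₗᵢ[ℂ] Lp ℂ 2 ν :=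
    { Ueq with norm_map' := fun ξ => by have := hTUnorm ξ; simp at this; exact this }
  have hUapp : ∀ ξ, U ξ = TU ξ := fun ξ => rfl
  refine ⟨U, fun ξ => hTUae ξ, fun g => ?_⟩
  -- the operator `B̃_g`
  set c : ℝ≥0 := Measure.haarScalarFactor (μ.map (· * g)) μ with hc
  have hcpos : (0 : ℝ≥0) < c := Measure.haarScalarFactor_pos_of_isHaarMeasure _ _
  have hmapg : μ.map (· * g) = (c : ℝ≥0∞) • μ := by
    have := Measure.isMulLeftInvariant_eq_smul (μ.map (· * g)) μ
    rw [← hc] at this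
    rw [this, ENNReal.smul_def]
  let eB : (G × G) ≃ᵐ (G × G) := (MeasurableEquiv.refl G).prodCongr (MeasurableEquiv.mulRight g)
  have heB : ∀ p : G × G, eB p = (p.1, p.2 * g) := fun p => rfl
  have hBmap : ν.map eB = (c : ℝ≥0∞) • ν := by
    have hco : ⇑eB = Prod.map (id : G → G) (· * g) := rfl
    rw [hν, hco, ← Measure.map_prod_map _ _ measurable_id (measurable_mul_const g),
      Measure.map_id, hmapg, Stmt11Aux.prod_smul_right]
  let mB : G × G → ℂ := fun p => conj (ω g⁻¹ p.2⁻¹)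
  have hmB : Measurable mB := Complex.continuous_conj.measurable.comp
    (hmeas.comp (measurable_const.prodMk measurable_snd.inv))
  have habsB : ∀ p, ‖mB p‖ = 1 := fun p => by
    simpa [mB, Complex.norm_conj] using habs g⁻¹ p.2⁻¹
  obtain ⟨B0, hB0ae, _⟩ := Stmt11Aux.exists_op eB c hcpos.ne' hBmap mB hmB habsB
  have hacB : ν.map eB ≪ ν := by rw [hBmap]; exact Measure.smul_absolutelyContinuous
  have hcompB : ∀ {f h : G × G → ℂ}, f =ᵐ[ν] h →
      (fun x => f (eB x)) =ᵐ[ν] fun x => h (eB x) :=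
    fun h => ae_eq_comp eB.measurable.aemeasurable (h.filter_mono hacB.ae_le)
  refine ⟨⟨B0, fun ξ => hB0ae ξ⟩, ?_⟩
  -- the commutation relation
  intro B hB ξ
  apply Lp.ext
  have hUB : U (B ξ) = TU (B ξ) := rfl
  rw [hUB]
  filter_upwards [hTUae (B ξ), hcompU (hB ξ), hB (U ξ), hcompB (hTUae ξ)] with p h1 h2 h3 h4

  rw [h1, h2, h3]
  have h4' : (U ξ : G × G → ℂ) (p.1, p.2 * g) = mU (eB p) * (ξ : G × G → ℂ) (eU (eB p)) := h4
  rw [h4']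
  simp only [heU, heB, mU, mul_inv_rev, inv_inv, mul_assoc]
  linear_combination (Stmt11Aux.coc_key ω habs hcoc g p.1 p.2) *
    (ξ : G × G → ℂ) (p.1, p.1⁻¹ * (p.2 * g))
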